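/- In a twisted homotopical category, a commutative square in mon with horizontal maps f: A → A' and g: B → B' and vertical maps α: A → B and α': A' → B' that are weak equivalences induces a weak equivalence of Borel quotients A'⫽A → B'⫽B. -/

import Mathlib

/-!
Statement 0 (Lemma 1.10(1) of Farjoun–Hess, "Normal and conormal maps in homotopy theory").

In a twisted homotopical category, for every morphism `f : A ⟶ A'` of monoids there is a
weak equivalence of biprincipal bundles from
`(Ω B̄A' → B̄A' ∖̃ B̄A → B̄A)` to `(A' → A' ⫽ A → B̄A)`:
the left vertical map is the counit `v_{A'} : Ω B̄ A' → A'` (a weak equivalence), the middle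
vertical map `B̄A' ∖̃ B̄A → A' ⫽ A` is a weak equivalence, and the right vertical map is the
identity of `B̄A`.

We model a twisted homotopical category as a homotopical category `(M, w)` (weak equivalences
contain identities and satisfy two-out-of-six) together with full subcategories `Mon` of
augmented monoids and `Comon` of coaugmented comonoids (given abstractly, with underlying-object
functors into `M`), a cobar/bar adjunction `Ω ⊣ B̄`, and, for every classifying (comonoid) map
`g : C ⟶ B̄ A`, the total object `Tot g` of the corresponding classifiable biprincipal bundle
`A ⟶ Tot g ⟶ C`, with pushforwards along monoid maps and pullbacks along comonoid maps.
The classifying bundle of `A` is `ζ(A) = Tot (𝟙 (B̄ A))`, the classifying bundle of `C` is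
`ξ(C) = Tot (u_C)` where `u` is the unit of the adjunction.  The Borel quotient of
`f : A ⟶ A'` is the total object of the bundle classified by `B̄ f`, and the Borel kernel
of `g : C' ⟶ C` is the total object of the bundle classified by `g ≫ u_C`.
-/

open CategoryTheory

universe v v₁ v₂ u u₁ u₂

/-- A twisted homotopical category (interface form). -/
structure TwistedHomotopicalCategory (M : Type u) [Category.{v} M]
    (Mon : Type u₁) [Category.{v₁} Mon] (Comon : Type u₂) [Category.{v₂} Comon] where
  /-- the weak equivalences of `M` -/
  w : MorphismProperty M
  /-- weak equivalences contain all identities -/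
  w_id : ∀ X : M, w (𝟙 X)
  /-- the two-out-of-six property -/
  w_two_out_of_six : ∀ {X Y Z T : M} (r : X ⟶ Y) (s : Y ⟶ Z) (t : Z ⟶ T),
    w (r ≫ s) → w (s ≫ t) → w r ∧ w s ∧ w t ∧ w (r ≫ s ≫ t)
  /-- underlying object in `M` of a monoid -/
  monU : Mon ⥤ M
  /-- underlying object in `M` of a comonoid -/
  comonU : Comon ⥤ M
  /-- the cobar construction -/
  Om : Comon ⥤ Mon
  /-- the bar construction -/
  Bar : Mon ⥤ Comon
  /-- the cobar/bar adjunction -/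
  adj : Om ⊣ Bar
  /-- the monoidal unit -/
  unit : M
  /-- the unit of an (augmented) monoid -/
  monUnit : ∀ A : Mon, unit ⟶ monU.obj A
  /-- the augmentation of an (augmented) monoid -/
  monAug : ∀ A : Mon, monU.obj A ⟶ unit
  /-- the counit of a (coaugmented) comonoid -/
  comonCounit : ∀ C : Comon, comonU.obj C ⟶ unit
  /-- the coaugmentation of a (coaugmented) comonoid -/
  comonCoaug : ∀ C : Comon, unit ⟶ comonU.obj C
  /-- total object of the classifiable biprincipal bundle with fibre monoid `A`, base
  comonoid `C`, classified by `g : C ⟶ B̄ A`. -/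
  Tot : ∀ {C : Comon} {A : Mon}, (C ⟶ Bar.obj A) → M
  /-- inclusion of the fibre monoid into the total object (a map of right `A`-modules) -/
  totI : ∀ {C : Comon} {A : Mon} (g : C ⟶ Bar.obj A), monU.obj A ⟶ Tot g
  /-- projection of the total object onto the base (a map of left `C`-comodules) -/
  totP : ∀ {C : Comon} {A : Mon} (g : C ⟶ Bar.obj A), Tot g ⟶ comonU.obj C
  /-- pushforward of a classifiable biprincipal bundle along a monoid map:
  `f_* (Tot g) = Tot (g ≫ B̄ f)`, with its canonical comparison map. -/
  push : ∀ {C : Comon} {A A' : Mon} (g : C ⟶ Bar.obj A) (f : A ⟶ A'),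
    Tot g ⟶ Tot (g ≫ Bar.map f)
  push_i : ∀ {C : Comon} {A A' : Mon} (g : C ⟶ Bar.obj A) (f : A ⟶ A'),
    totI g ≫ push g f = monU.map f ≫ totI (g ≫ Bar.map f)
  push_p : ∀ {C : Comon} {A A' : Mon} (g : C ⟶ Bar.obj A) (f : A ⟶ A'),
    push g f ≫ totP (g ≫ Bar.map f) = totP g
  /-- pullback of a classifiable biprincipal bundle along a comonoid map:
  `h^* (Tot g) = Tot (h ≫ g)`, with its canonical comparison map. -/
  pull : ∀ {C' C : Comon} {A : Mon} (h : C' ⟶ C) (g : C ⟶ Bar.obj A),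
    Tot (h ≫ g) ⟶ Tot g
  pull_i : ∀ {C' C : Comon} {A : Mon} (h : C' ⟶ C) (g : C ⟶ Bar.obj A),
    totI (h ≫ g) ≫ pull h g = totI g
  pull_p : ∀ {C' C : Comon} {A : Mon} (h : C' ⟶ C) (g : C ⟶ Bar.obj A),
    pull h g ≫ totP g = totP (h ≫ g) ≫ comonU.map h
  /-- axiom (1): the unit of the cobar/bar adjunction is a weak equivalence -/
  unit_w : ∀ C : Comon, w (comonU.map (adj.unit.app C))
  /-- axiom (1): the counit of the cobar/bar adjunction is a weak equivalence -/
  counit_w : ∀ A : Mon, w (monU.map (adj.counit.app A))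
  /-- axiom (2): `Ω` is homotopical -/
  Om_w : ∀ {C C' : Comon} (g : C ⟶ C'), w (comonU.map g) → w (monU.map (Om.map g))
  /-- axiom (2): `B̄` is homotopical -/
  Bar_w : ∀ {A A' : Mon} (f : A ⟶ A'), w (monU.map f) → w (comonU.map (Bar.map f))
  /-- axiom (3): `𝓔 A ⟶ B̄ A ⟶ I` is a weak equivalence, where `𝓔 A = Tot (𝟙 (B̄ A))` -/
  E_acyclic : ∀ A : Mon, w (totP (𝟙 (Bar.obj A)) ≫ comonCounit (Bar.obj A))
  /-- axiom (4): `I ⟶ Ω C ⟶ 𝓟 C` is a weak equivalence, where `𝓟 C = Tot (u_C)` -/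
  P_acyclic : ∀ C : Comon, w (monUnit (Om.obj C) ≫ totI (adj.unit.app C))
  /-- axiom (5): pushforward of a classifiable biprincipal bundle along a weak
  equivalence of monoids is a weak equivalence of bundles -/
  push_w : ∀ {C : Comon} {A A' : Mon} (g : C ⟶ Bar.obj A) (f : A ⟶ A'),
    w (monU.map f) → w (push g f)
  /-- axiom (6): pullback of a classifiable biprincipal bundle along a weak
  equivalence of comonoids is a weak equivalence of bundles -/
  pull_w : ∀ {C' C : Comon} {A : Mon} (h : C' ⟶ C) (g : C ⟶ Bar.obj A),
    w (comonU.map h) → w (pull h g)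

namespace TwistedHomotopicalCategory

variable {M : Type u} [Category.{v} M] {Mon : Type u₁} [Category.{v₁} Mon]
  {Comon : Type u₂} [Category.{v₂} Comon]
  (T : TwistedHomotopicalCategory M Mon Comon)

/-- The Borel (homotopy) quotient `A' ⫽ A` of a monoid map `f : A ⟶ A'`: the total object of
the biprincipal bundle classified by `B̄ f`. -/
def borelQuot {A A' : Mon} (f : A ⟶ A') : M := T.Tot (T.Bar.map f)

/-- `π_f : A' ⟶ A' ⫽ A` -/
def πmap {A A' : Mon} (f : A ⟶ A') : T.monU.obj A' ⟶ T.borelQuot f := T.totI (T.Bar.map f)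

/-- `δ_f : A' ⫽ A ⟶ B̄ A` -/
def δmap {A A' : Mon} (f : A ⟶ A') : T.borelQuot f ⟶ T.comonU.obj (T.Bar.obj A) :=
  T.totP (T.Bar.map f)

/-- The Borel (homotopy) kernel `C ∖̃ C'` of a comonoid map `g : C' ⟶ C`: the total object of
the biprincipal bundle classified by `g ≫ u_C`. -/
def borelKer {C' C : Comon} (g : C' ⟶ C) : M := T.Tot (g ≫ T.adj.unit.app C)

/-- `∂_g : Ω C ⟶ C ∖̃ C'` -/
def delMap {C' C : Comon} (g : C' ⟶ C) : T.monU.obj (T.Om.obj C) ⟶ T.borelKer g :=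
  T.totI (g ≫ T.adj.unit.app C)

/-- `ι_g : C ∖̃ C' ⟶ C'` -/
def ιmap {C' C : Comon} (g : C' ⟶ C) : T.borelKer g ⟶ T.comonU.obj C' :=
  T.totP (g ≫ T.adj.unit.app C)

end TwistedHomotopicalCategory

open TwistedHomotopicalCategory

section Aux

variable {M : Type u} [Category.{v} M] {Mon : Type u₁} [Category.{v₁} Mon]
  {Comon : Type u₂} [Category.{v₂} Comon]
  (T : TwistedHomotopicalCategory M Mon Comon)

lemma aux_w_comp {X Y Z : M} (r : X ⟶ Y) (s : Y ⟶ Z) (hr : T.w r) (hs : T.w s) :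
    T.w (r ≫ s) := by
  have h := T.w_two_out_of_six r (𝟙 Y) s (by simpa) (by simpa)
  simpa using h.2.2.2

lemma aux_tot_cast_i {C : Comon} {A : Mon} {g g' : C ⟶ T.Bar.obj A} (h : g = g') :
    T.totI g ≫ eqToHom (by rw [h]) = T.totI g' := by subst h; simp

lemma aux_tot_cast_p {C : Comon} {A : Mon} {g g' : C ⟶ T.Bar.obj A} (h : g = g') :
    (eqToHom (by rw [h]) : T.Tot g ⟶ T.Tot g') ≫ T.totP g' = T.totP g := by subst h; simp

lemma aux_tot_cast_w {C : Comon} {A : Mon} {g g' : C ⟶ T.Bar.obj A} (h : g = g') :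
    T.w (eqToHom (by rw [h]) : T.Tot g ⟶ T.Tot g') := by
  subst h; simpa using T.w_id (T.Tot g)

end Aux

/-- (Remark 1.8 of the paper.)  In a twisted homotopical category, a
commutative square in `mon`, with horizontal maps `f : A ⟶ A'` and `g : B ⟶ B'` and with
vertical maps `α : A ⟶ B` and `α' : A' ⟶ B'` that are weak equivalences, induces a weak
equivalence of Borel quotients `A' ⫽ A ⟶ B' ⫽ B` (a map of bundles compatible with
`π` and `δ`). -/
theorem normal_conormal_stmt2
    {M : Type u} [Category.{v} M] {Mon : Type u₁} [Category.{v₁} Mon]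
    {Comon : Type u₂} [Category.{v₂} Comon]
    (T : TwistedHomotopicalCategory M Mon Comon)
    {A A' B B' : Mon} (f : A ⟶ A') (g : B ⟶ B') (α : A ⟶ B) (α' : A' ⟶ B')
    (sq : f ≫ α' = α ≫ g)
    (hα : T.w (T.monU.map α)) (hα' : T.w (T.monU.map α')) :
    ∃ m : T.borelQuot f ⟶ T.borelQuot g,
      T.w m ∧
      T.πmap f ≫ m = T.monU.map α' ≫ T.πmap g ∧
      m ≫ T.δmap g = T.δmap f ≫ T.comonU.map (T.Bar.map α) := by
  have hBar : T.Bar.map f ≫ T.Bar.map α' = T.Bar.map α ≫ T.Bar.map g := by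
    rw [← T.Bar.map_comp, ← T.Bar.map_comp, sq]
  refine ⟨T.push (T.Bar.map f) α' ≫ (eqToHom (by rw [hBar])) ≫
      T.pull (T.Bar.map α) (T.Bar.map g), ?_, ?_, ?_⟩
  · refine aux_w_comp T _ _ (T.push_w _ _ hα') (aux_w_comp T _ _ (aux_tot_cast_w T hBar) ?_)
    exact T.pull_w _ _ (T.Bar_w α hα)
  · dsimp only [borelQuot]
    rw [πmap, πmap, ← Category.assoc, T.push_i, Category.assoc, ← Category.assoc (T.totI _),
      aux_tot_cast_i T hBar, T.pull_i]
  · dsimp only [borelQuot]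
    rw [δmap, δmap, Category.assoc, Category.assoc, T.pull_p, ← Category.assoc (eqToHom _),
      aux_tot_cast_p T hBar, ← Category.assoc, T.push_p]
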